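/- In synchronous majority dynamics on an infinite, locally finite graph with all degrees odd, no finite set of vertices is a dynamic monopoly: for any finite W ⊆ V, if initially A^i_0 = +1 for all i ∈ W and A^i_0 = −1 for all i ∉ W, then it is not the case that every vertex's opinion eventually stabilizes at +1. In fact, only finitely many vertices ever take the opinion +1 at any time. -/

import Mathlib

section aux
variable {V : Type*} [DecidableEq V] (G : SimpleGraph V)
    [∀ v : V, Fintype (G.neighborSet v)]
    (W : Finset V) (A : ℕ → V → ℤ)

lemma aux_val (hA0 : ∀ v, A 0 v = if v ∈ W then 1 else -1)
    (hdyn : ∀ t v, A (t + 1) v =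
      if 0 < ∑ j ∈ G.neighborFinset v, A t j then 1 else -1) :
    ∀ t v, A t v = 1 ∨ A t v = -1 := by
  intro t
  cases t with
  | zero => intro v; rw [hA0]; split <;> simp
  | succ t => intro v; rw [hdyn]; split <;> simp

lemma aux_fin (hA0 : ∀ v, A 0 v = if v ∈ W then 1 else -1)
    (hdyn : ∀ t v, A (t + 1) v =
      if 0 < ∑ j ∈ G.neighborFinset v, A t j then 1 else -1) :
    ∀ t, {v | A t v = 1}.Finite := by
  intro t
  induction t with
  | zero =>
    apply W.finite_toSet.subset
    intro v hv
    rw [Set.mem_setOf_eq, hA0] at hv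
    by_contra hw
    rw [if_neg (by simpa using hw)] at hv
    norm_num at hv
  | succ t ih =>
    apply Set.Finite.subset (Set.Finite.biUnion ih (fun j _ => (G.neighborSet j).toFinite))
    intro v hv
    rw [Set.mem_setOf_eq, hdyn] at hv
    have hpos : 0 < ∑ j ∈ G.neighborFinset v, A t j := by
      by_contra hp
      rw [if_neg hp] at hv; norm_num at hv
    have hex : ∃ j ∈ G.neighborFinset v, A t j = 1 := by
      by_contra hc
      push_neg at hc
      have hle : ∑ j ∈ G.neighborFinset v, A t j ≤ 0 := by
        apply Finset.sum_nonpos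
        intro j hj
        rcases aux_val G W A hA0 hdyn t j with h1 | h1
        · exact absurd h1 (hc j hj)
        · rw [h1]; norm_num
      omega
    obtain ⟨j, hj, hj1⟩ := hex
    exact Set.mem_biUnion hj1 ((SimpleGraph.mem_neighborFinset ..).mp hj).symm

lemma aux_symm (F : Finset V) (f g : V → ℤ)
    (h : ∀ i ∈ F, ∀ j ∈ G.neighborFinset i, j ∉ F → f i * g j = f j * g i) :
    ∑ i ∈ F, ∑ j ∈ G.neighborFinset i, f i * g j
      = ∑ i ∈ F, ∑ j ∈ G.neighborFinset i, f j * g i := by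
  have hsplit : ∀ (h' : V → V → ℤ),
      ∑ i ∈ F, ∑ j ∈ G.neighborFinset i, h' i j
        = (∑ i ∈ F, ∑ j ∈ F, if j ∈ G.neighborFinset i then h' i j else 0)
          + ∑ i ∈ F, ∑ j ∈ (G.neighborFinset i) \ F, h' i j := by
    intro h'
    rw [← Finset.sum_add_distrib]
    apply Finset.sum_congr rfl
    intro i _
    rw [← Finset.sum_inter_add_sum_sdiff (G.neighborFinset i) F (h' i)]
    congr 1
    have heq : (G.neighborFinset i) ∩ F = F.filter (fun j => j ∈ G.neighborFinset i) := by
      ext j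
      simp [and_comm]
    rw [heq, Finset.sum_filter]
  rw [hsplit, hsplit]
  congr 1
  · rw [Finset.sum_comm]
    apply Finset.sum_congr rfl
    intro i _
    apply Finset.sum_congr rfl
    intro j _
    have : j ∈ G.neighborFinset i ↔ i ∈ G.neighborFinset j := by
      simp [SimpleGraph.mem_neighborFinset, G.adj_comm]
    simp only [this]
  · apply Finset.sum_congr rfl
    intro i hi
    apply Finset.sum_congr rfl
    intro j hj
    rw [Finset.mem_sdiff] at hj
    exact h i hi j hj.1 hj.2

end aux

/-- No dynamic monopolies on infinite graphs. In synchronous majority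
dynamics on an infinite, connected, locally finite graph with all degrees odd, starting
from `+1` exactly on a finite set `W`, only finitely many vertices ever hold the opinion
`+1`; in particular, it is not the case that every vertex's opinion stabilizes at `+1`. -/
theorem stmt_10 {V : Type*} [Infinite V] [DecidableEq V] (G : SimpleGraph V)
    [∀ v : V, Fintype (G.neighborSet v)]
    (hconn : G.Connected) (hodd : ∀ v, Odd (G.degree v))
    (W : Finset V)
    (A : ℕ → V → ℤ)
    (hA0 : ∀ v, A 0 v = if v ∈ W then 1 else -1)
    (hdyn : ∀ t v, A (t + 1) v =
      if 0 < ∑ j ∈ G.neighborFinset v, A t j then 1 else -1) :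
    {v : V | ∃ t : ℕ, A t v = 1}.Finite ∧
    ¬ (∀ v : V, ∃ T : ℕ, ∀ t : ℕ, T ≤ t → A t v = 1) := by
  classical
  have hval : ∀ t v, A t v = 1 ∨ A t v = -1 := aux_val G W A hA0 hdyn
  have hfin : ∀ t, {v | A t v = 1}.Finite := aux_fin G W A hA0 hdyn
  set D : ℕ → Finset V := fun t => (hfin t).toFinset with hDdef
  have hD : ∀ t v, v ∈ D t ↔ A t v = 1 := fun t v => (hfin t).mem_toFinset
  set F : ℕ → Finset V := fun t =>
    (D t ∪ D (t+1)) ∪ (D t ∪ D (t+1)).biUnion (fun w => G.neighborFinset w) with hFdef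
  -- membership helpers
  have hDF : ∀ t, D t ⊆ F t := fun t => (Finset.subset_union_left ..).trans
    (Finset.subset_union_left ..)
  have hDF' : ∀ t, D (t+1) ⊆ F t := fun t => (Finset.subset_union_right ..).trans
    (Finset.subset_union_left ..)
  have hNF : ∀ t i j, j ∈ G.neighborFinset i → (A t i = 1 ∨ A (t+1) i = 1) → j ∈ F t := by
    intro t i j hj hi
    apply Finset.mem_union_right
    apply Finset.mem_biUnion.mpr
    refine ⟨i, ?_, hj⟩
    rcases hi with hi | hi
    · exact Finset.mem_union_left _ ((hD t i).mpr hi)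
    · exact Finset.mem_union_right _ ((hD (t+1) i).mpr hi)
  -- out of F t : all values are -1
  have hout : ∀ t i, i ∉ F t → ∀ j ∈ G.neighborFinset i,
      A t i = -1 ∧ A (t+1) j = -1 := by
    intro t i hi j hj
    constructor
    · rcases hval t i with h | h
      · exact absurd (hDF t ((hD t i).mpr h)) hi
      · exact h
    · rcases hval (t+1) j with h | h
      · have : i ∈ G.neighborFinset j := by
          rw [SimpleGraph.mem_neighborFinset] at hj ⊢; exact hj.symm
        exact absurd (hNF t j i this (Or.inr h)) hi
      · exact h
  -- energy
  set E : ℕ → Finset V → ℤ := fun t s =>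
    ∑ i ∈ s, ∑ j ∈ G.neighborFinset i, (1 - A t i * A (t+1) j) with hEdef
  have hE_subset : ∀ t s, F t ⊆ s → E t s = E t (F t) := by
    intro t s hs
    refine (Finset.sum_subset hs ?_).symm
    intro i _ hi
    apply Finset.sum_eq_zero
    intro j hj
    obtain ⟨h1, h2⟩ := hout t i hi j hj
    rw [h1, h2]; ring
  have hE_nonneg : ∀ t s, 0 ≤ E t s := by
    intro t s
    apply Finset.sum_nonneg
    intro i _
    apply Finset.sum_nonneg
    intro j _
    rcases hval t i with h1 | h1 <;> rcases hval (t+1) j with h2 | h2 <;>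
      rw [h1, h2] <;> norm_num
  -- oddness of neighbor sums
  have hoddS : ∀ t i, Odd (∑ j ∈ G.neighborFinset i, A t j) := by
    intro t i
    have h2 : (2 : ℤ) ∣ ∑ j ∈ G.neighborFinset i, (A t j - 1) := by
      apply Finset.dvd_sum
      intro j _
      rcases hval t j with h | h <;> rw [h] <;> norm_num
    have heq : ∑ j ∈ G.neighborFinset i, (A t j - 1)
        = (∑ j ∈ G.neighborFinset i, A t j) - (G.degree i : ℤ) := by
      rw [Finset.sum_sub_distrib]
      congr 1
      rw [Finset.sum_const, nsmul_eq_mul, mul_one, SimpleGraph.degree]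
    have hodd' : Odd ((G.degree i : ℤ)) := by
      obtain ⟨k, hk⟩ := hodd i
      exact ⟨k, by push_cast [hk]; ring⟩
    have : ∑ j ∈ G.neighborFinset i, A t j
        = (∑ j ∈ G.neighborFinset i, (A t j - 1)) + (G.degree i : ℤ) := by
      rw [heq]; ring
    rw [this]
    obtain ⟨c, hc⟩ := h2
    exact (Even.add_odd ⟨c, by omega⟩ hodd')
  -- key identity
  have key : ∀ t (s : Finset V), F t ⊆ s → F (t+1) ⊆ s →
      E t s - E (t+1) s
        = ∑ i ∈ s, (A (t+2) i - A t i) * ∑ j ∈ G.neighborFinset i, A (t+1) j := by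
    intro t s hs1 hs2
    have hsymm : ∑ i ∈ s, ∑ j ∈ G.neighborFinset i, A (t+1) i * A (t+2) j
        = ∑ i ∈ s, ∑ j ∈ G.neighborFinset i, A (t+1) j * A (t+2) i := by
      apply aux_symm
      intro i hi j hj hjs
      have hj1 : A (t+1) j = -1 := by
        rcases hval (t+1) j with h | h
        · exact absurd (hs1 (hDF' t ((hD (t+1) j).mpr h))) hjs
        · exact h
      have hj2 : A (t+2) j = -1 := by
        rcases hval (t+2) j with h | h
        · exact absurd (hs2 (hDF' (t+1) ((hD (t+2) j).mpr h))) hjs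
        · exact h
      have hi1 : A (t+1) i = -1 := by
        rcases hval (t+1) i with h | h
        · exact absurd (hs1 (hNF t i j hj (Or.inr h))) hjs
        · exact h
      have hi2 : A (t+2) i = -1 := by
        rcases hval (t+2) i with h | h
        · exact absurd (hs2 (hNF (t+1) i j hj (Or.inr h))) hjs
        · exact h
      rw [hi1, hi2, hj1, hj2]
    calc E t s - E (t+1) s
        = ∑ i ∈ s, ∑ j ∈ G.neighborFinset i,
            (A (t+1) i * A (t+2) j - A t i * A (t+1) j) := by
          simp only [hEdef, ← Finset.sum_sub_distrib]
          apply Finset.sum_congr rfl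
          intro i _
          apply Finset.sum_congr rfl
          intro j _
          ring
      _ = ∑ i ∈ s, ∑ j ∈ G.neighborFinset i,
            (A (t+1) j * A (t+2) i - A t i * A (t+1) j) := by
          simp only [Finset.sum_sub_distrib]
          rw [hsymm]
      _ = ∑ i ∈ s, (A (t+2) i - A t i) * ∑ j ∈ G.neighborFinset i, A (t+1) j := by
          apply Finset.sum_congr rfl
          intro i _
          rw [Finset.mul_sum]
          apply Finset.sum_congr rfl
          intro j _
          ring
  -- term bounds
  have hterm_two : ∀ t i, A (t+2) i ≠ A t i →
      2 ≤ (A (t+2) i - A t i) * ∑ j ∈ G.neighborFinset i, A (t+1) j := by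
    intro t i hne
    set S := ∑ j ∈ G.neighborFinset i, A (t+1) j with hSdef
    have hA2 : A (t+2) i = if 0 < S then 1 else -1 := hdyn (t+1) i
    have hSne : S ≠ 0 := by
      intro h0
      have := hoddS (t+1) i
      rw [← hSdef, h0] at this
      exact (Int.not_odd_iff_even.mpr Even.zero) this
    by_cases hS : 0 < S
    · rw [if_pos hS] at hA2
      have hA0i : A t i = -1 := by
        rcases hval t i with h | h
        · rw [hA2, h] at hne; exact absurd rfl hne
        · exact h
      rw [hA2, hA0i]
      nlinarith
    · rw [if_neg hS] at hA2
      have hA0i : A t i = 1 := by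
        rcases hval t i with h | h
        · exact h
        · rw [hA2, h] at hne; exact absurd rfl hne
      have hSneg : S ≤ -1 := by omega
      rw [hA2, hA0i]
      nlinarith
  have hterm_nonneg : ∀ t i, 0 ≤ (A (t+2) i - A t i) * ∑ j ∈ G.neighborFinset i, A (t+1) j := by
    intro t i
    by_cases hne : A (t+2) i = A t i
    · rw [hne]; ring_nf; simp
    · linarith [hterm_two t i hne]
  -- monotone energy
  have hdecr : ∀ t, E (t+1) (F (t+1)) ≤ E t (F t) := by
    intro t
    have h1 : E t (F t ∪ F (t+1)) = E t (F t) :=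
      hE_subset t _ (Finset.subset_union_left ..)
    have h2 : E (t+1) (F t ∪ F (t+1)) = E (t+1) (F (t+1)) :=
      hE_subset (t+1) _ (Finset.subset_union_right ..)
    have h3 := key t (F t ∪ F (t+1)) (Finset.subset_union_left ..)
      (Finset.subset_union_right ..)
    have h4 : 0 ≤ ∑ i ∈ F t ∪ F (t+1),
        (A (t+2) i - A t i) * ∑ j ∈ G.neighborFinset i, A (t+1) j :=
      Finset.sum_nonneg (fun i _ => hterm_nonneg t i)
    linarith
  have hstrict : ∀ t, (∃ i, A (t+2) i ≠ A t i) →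
      E (t+1) (F (t+1)) + 2 ≤ E t (F t) := by
    intro t ⟨i, hi⟩
    have h1 : E t (F t ∪ F (t+1)) = E t (F t) :=
      hE_subset t _ (Finset.subset_union_left ..)
    have h2 : E (t+1) (F t ∪ F (t+1)) = E (t+1) (F (t+1)) :=
      hE_subset (t+1) _ (Finset.subset_union_right ..)
    have h3 := key t (F t ∪ F (t+1)) (Finset.subset_union_left ..)
      (Finset.subset_union_right ..)
    have hi_mem : i ∈ F t ∪ F (t+1) := by
      rcases hval t i with h | h
      · exact Finset.mem_union_left _ (hDF t ((hD t i).mpr h))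
      · have h2' : A (t+2) i = 1 := by
          rcases hval (t+2) i with h' | h'
          · exact h'
          · rw [h', h] at hi; exact absurd rfl hi
        exact Finset.mem_union_right _ (hDF' (t+1) ((hD (t+2) i).mpr h2'))
    have h5 : 2 ≤ ∑ i ∈ F t ∪ F (t+1),
        (A (t+2) i - A t i) * ∑ j ∈ G.neighborFinset i, A (t+1) j := by
      calc (2:ℤ) ≤ (A (t+2) i - A t i) * ∑ j ∈ G.neighborFinset i, A (t+1) j :=
            hterm_two t i hi
        _ ≤ _ := Finset.single_le_sum (fun k _ => hterm_nonneg t k) hi_mem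
    linarith
  -- toNat sequence
  set g : ℕ → ℕ := fun t => (E t (F t)).toNat with hgdef
  have hg : ∀ t, (g t : ℤ) = E t (F t) := fun t => Int.toNat_of_nonneg (hE_nonneg t (F t))
  have hgstep : ∀ b, g (b+1) ≤ g b := by
    intro b
    have h1 := hdecr b
    have h2 := hg b
    have h3 := hg (b+1)
    omega
  have hgmono : ∀ a b, a ≤ b → g b ≤ g a := by
    intro a b hab
    induction b, hab using Nat.le_induction with
    | base => exact le_rfl
    | succ n _ ih => exact (hgstep n).trans ih
  have hrange : (Set.range g).Nonempty := ⟨g 0, 0, rfl⟩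
  obtain ⟨T, hT⟩ := Nat.sInf_mem hrange
  have hconst : ∀ t, T ≤ t → g t = g T := by
    intro t ht
    have h1 : g t ≤ g T := hgmono T t ht
    have h2 : sInf (Set.range g) ≤ g t := Nat.sInf_le ⟨t, rfl⟩
    omega
  -- eventual period 2
  have hper : ∀ t, T ≤ t → ∀ i, A (t+2) i = A t i := by
    intro t ht i
    by_contra hne
    have := hstrict t ⟨i, hne⟩
    have e1 := hg t; have e2 := hg (t+1)
    have c1 := hconst t ht
    have c2 := hconst (t+1) (by omega)
    omega
  -- representation of all times by small times
  have hrepr : ∀ t v, A t v = 1 → ∃ s, s < T + 2 ∧ A s v = 1 := by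
    intro t
    induction t using Nat.strong_induction_on with
    | _ t ih =>
      intro v hv
      rcases Nat.lt_or_ge t (T+2) with h | h
      · exact ⟨t, h, hv⟩
      · have ht2 : t - 2 + 2 = t := by omega
        have hAeq : A t v = A (t-2) v := by
          have := hper (t-2) (by omega) v
          rw [ht2] at this
          exact this
        exact ih (t-2) (by omega) v (by rw [← hAeq]; exact hv)
  have hSfin : {v : V | ∃ t : ℕ, A t v = 1}.Finite := by
    apply Set.Finite.subset
      (Set.Finite.biUnion (Set.finite_Iio (T+2)) (fun s _ => hfin s))
    intro v hv
    obtain ⟨t, hv⟩ := hv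
    obtain ⟨s, hs, hsv⟩ := hrepr t v hv
    exact Set.mem_biUnion hs hsv
  refine ⟨hSfin, ?_⟩
  intro hcontra
  obtain ⟨v, hv⟩ := hSfin.infinite_compl.nonempty
  obtain ⟨T', hT'⟩ := hcontra v
  exact hv ⟨T', hT' T' le_rfl⟩
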